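/- If A ⊆ ℕ₀ and B ⊆ ℕ₀ are sets of nonnegative integers with r_{A,h}(n) = r_{B,h}(n) for all n ∈ ℕ₀, where h ≥ 1, then A = B. -/

import Mathlib

open Finset

/-- The representation function of order `h` of a set of nonnegative integers. -/
noncomputable def repFnN (A : Set ℕ) (h : ℕ) (n : ℕ) : ℕ∞ :=
  {g : Fin h → ℕ | Monotone g ∧ (∀ i, g i ∈ A) ∧ ∑ i, g i = n}.encard

lemma repSet_finite (A : Set ℕ) (h n : ℕ) :
    {g : Fin h → ℕ | Monotone g ∧ (∀ i, g i ∈ A) ∧ ∑ i, g i = n}.Finite := by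
  apply Set.Finite.subset (Set.Finite.pi (fun _ : Fin h => Set.finite_Iic n))
  intro g hg
  simp only [Set.mem_pi, Set.mem_univ, Set.mem_Iic, forall_true_left]
  intro i
  calc g i ≤ ∑ j, g j := Finset.single_le_sum (fun j _ => Nat.zero_le _) (mem_univ i)
  _ = n := hg.2.2

/-- The special tuple `(a, ..., a, N)`. -/
def gZero (h N a : ℕ) : Fin h → ℕ := fun i => if (i : ℕ) = h - 1 then N else a

lemma gZero_monotone {h N a : ℕ} (haN : a ≤ N) : Monotone (gZero h N a) := by
  intro i j hij
  have hi := i.isLt; have hj := j.isLt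
  have hij' : (i : ℕ) ≤ (j : ℕ) := hij
  unfold gZero
  by_cases h1 : (i : ℕ) = h - 1
  · have h2 : (j : ℕ) = h - 1 := by omega
    simp [h1, h2]
  · by_cases h2 : (j : ℕ) = h - 1 <;> simp [h1, h2, haN]

lemma gZero_sum {h : ℕ} (N a : ℕ) (hh : 1 ≤ h) :
    ∑ i, gZero h N a i = (h - 1) * a + N := by
  have hL : (⟨h - 1, by omega⟩ : Fin h) ∈ (univ : Finset (Fin h)) := mem_univ _
  rw [← Finset.add_sum_erase _ _ hL]
  have h1 : gZero h N a ⟨h - 1, by omega⟩ = N := by simp [gZero]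
  have h2 : ∑ i ∈ univ.erase (⟨h - 1, by omega⟩ : Fin h), gZero h N a i
      = (h - 1) * a := by
    rw [Finset.sum_congr rfl (fun i hi => ?_), Finset.sum_const,
      Finset.card_erase_of_mem hL, card_univ, Fintype.card_fin, smul_eq_mul]
    · show gZero h N a i = a
      have : i ≠ (⟨h - 1, by omega⟩ : Fin h) := (Finset.mem_erase.mp hi).1
      have : (i : ℕ) ≠ h - 1 := fun hc => this (Fin.ext hc)
      simp [gZero, this]
  rw [h1, h2]; ring

lemma mem_cases {h N a : ℕ} (hh : 1 ≤ h) (A : Set ℕ) (haN : a < N)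
    (hmin : ∀ k < a, k ∉ A) {g : Fin h → ℕ}
    (hm : Monotone g) (hA : ∀ i, g i ∈ A) (hs : ∑ i, g i = (h - 1) * a + N) :
    (∀ i, g i < N) ∨ (g = gZero h N a ∧ N ∈ A) := by
  have hge : ∀ i, a ≤ g i := by
    intro i
    by_contra hc
    exact hmin _ (by omega) (hA i)
  have hle : ∀ i, g i ≤ N := by
    intro j
    by_contra hc
    push_neg at hc
    have h1 : g j + ∑ i ∈ univ.erase j, g i = (h - 1) * a + N := by
      rw [Finset.add_sum_erase _ _ (mem_univ j), hs]
    have h2 : (h - 1) * a ≤ ∑ i ∈ univ.erase j, g i := by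
      calc (h - 1) * a = ∑ _i ∈ univ.erase j, a := by
            rw [Finset.sum_const, Finset.card_erase_of_mem (mem_univ j), card_univ,
              Fintype.card_fin, smul_eq_mul]
      _ ≤ _ := Finset.sum_le_sum (fun i _ => hge i)
    omega
  by_cases hN' : ∀ i, g i < N
  · exact Or.inl hN'
  push_neg at hN'
  obtain ⟨j, hj⟩ := hN'
  have hjN : g j = N := le_antisymm (hle j) hj
  set L : Fin h := ⟨h - 1, by omega⟩ with hLdef
  have hjL : j ≤ L := by
    have := j.isLt
    simp only [Fin.le_def, hLdef]
    omega
  have hgL : g L = N := le_antisymm (hle L) (hjN ▸ hm hjL)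
  have herase : ∑ i ∈ univ.erase L, g i = (h - 1) * a := by
    have h1 := Finset.add_sum_erase univ g (mem_univ L)
    rw [hs] at h1
    omega
  have hall : ∀ i ∈ univ.erase L, g i = a := by
    by_contra hc
    push_neg at hc
    obtain ⟨k, hk, hk2⟩ := hc
    have hlt : ∑ _i ∈ univ.erase L, a < ∑ i ∈ univ.erase L, g i :=
      Finset.sum_lt_sum (fun i _ => hge i) ⟨k, hk, lt_of_le_of_ne (hge k) (Ne.symm hk2)⟩
    rw [Finset.sum_const, Finset.card_erase_of_mem (mem_univ L), card_univ,
      Fintype.card_fin, smul_eq_mul, herase] at hlt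
    omega
  refine Or.inr ⟨funext fun i => ?_, hgL ▸ hA L⟩
  by_cases hiL : (i : ℕ) = h - 1
  · have hiL' : i = L := Fin.ext hiL
    simp [gZero, hiL, hgL, ← hiL']
    rw [hiL', hgL]
  · have hmem : i ∈ univ.erase L := by
      refine Finset.mem_erase.mpr ⟨fun hc => hiL ?_, mem_univ i⟩
      rw [hc]
    simp [gZero, hiL, hall i hmem]

lemma key_lemma (h : ℕ) (hh : 1 ≤ h) (A B : Set ℕ)
    (hAB : ∀ n : ℕ, repFnN A h n = repFnN B h n)
    (N : ℕ) (hlt : ∀ k < N, (k ∈ A ↔ k ∈ B)) (hNA : N ∈ A) : N ∈ B := by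
  classical
  by_contra hNB
  by_cases hex : ∃ a, a < N ∧ a ∈ A
  · -- take the minimal such a
    set a := Nat.find hex with hadef
    obtain ⟨haN, haA⟩ := Nat.find_spec hex
    have hminA : ∀ k < a, k ∉ A := fun k hk hkA =>
      Nat.find_min hex hk ⟨by omega, hkA⟩
    have haB : a ∈ B := (hlt a haN).mp haA
    have hminB : ∀ k < a, k ∉ B := fun k hk hkB =>
      hminA k hk ((hlt k (by omega)).mpr hkB)
    set s := (h - 1) * a + N with hsdef
    set T' : Set (Fin h → ℕ) :=
      {g : Fin h → ℕ | Monotone g ∧ (∀ i, g i ∈ A ∩ Set.Iio N) ∧ ∑ i, g i = s} with hT'def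
    have hT'fin : T'.Finite := repSet_finite (A ∩ Set.Iio N) h s
    have hg0 : gZero h N a ∉ T' := by
      intro hc
      have := (hc.2.1 ⟨h - 1, by omega⟩).2
      simp [gZero] at this
    have hTA : {g : Fin h → ℕ | Monotone g ∧ (∀ i, g i ∈ A) ∧ ∑ i, g i = s}
        = insert (gZero h N a) T' := by
      ext g
      constructor
      · rintro ⟨hm, hAg, hsg⟩
        rcases mem_cases hh A haN hminA hm hAg hsg with hall | ⟨heq, _⟩
        · exact Set.mem_insert_iff.mpr (Or.inr ⟨hm, fun i => ⟨hAg i, hall i⟩, hsg⟩)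
        · exact Set.mem_insert_iff.mpr (Or.inl heq)
      · intro hg
        rcases Set.mem_insert_iff.mp hg with rfl | hg
        · refine ⟨gZero_monotone (le_of_lt haN), fun i => ?_, gZero_sum N a hh⟩
          by_cases hi : (i : ℕ) = h - 1 <;> simp [gZero, hi, hNA, haA] <;> exact haA
        · exact ⟨hg.1, fun i => (hg.2.1 i).1, hg.2.2⟩
    have hTB : {g : Fin h → ℕ | Monotone g ∧ (∀ i, g i ∈ B) ∧ ∑ i, g i = s} = T' := by
      have hABN : A ∩ Set.Iio N = B ∩ Set.Iio N := by
        ext k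
        simp only [Set.mem_inter_iff, Set.mem_Iio]
        exact ⟨fun ⟨h1, h2⟩ => ⟨(hlt k h2).mp h1, h2⟩,
          fun ⟨h1, h2⟩ => ⟨(hlt k h2).mpr h1, h2⟩⟩
      ext g
      constructor
      · rintro ⟨hm, hBg, hsg⟩
        rcases mem_cases hh B haN hminB hm hBg hsg with hall | ⟨_, hNB'⟩
        · refine ⟨hm, fun i => ?_, hsg⟩
          rw [hABN]
          exact ⟨hBg i, hall i⟩
        · exact absurd hNB' hNB
      · intro hg
        refine ⟨hg.1, fun i => ?_, hg.2.2⟩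
        have := hg.2.1 i
        rw [hABN] at this
        exact this.1
    have hEA : repFnN A h s = T'.encard + 1 := by
      rw [repFnN, hTA, Set.encard_insert_of_notMem hg0]
    have hEB : repFnN B h s = T'.encard := by rw [repFnN, hTB]
    have hEq := hAB s
    rw [hEA, hEB] at hEq
    have hm : T'.encard = (hT'fin.toFinset.card : ℕ∞) :=
      hT'fin.encard_eq_coe_toFinset_card
    rw [hm] at hEq
    norm_cast at hEq
    omega
  · -- no element of A below N
    push_neg at hex
    have hnoB : ∀ k < N, k ∉ B := fun k hk hkB =>
      (hex k hk) ((hlt k hk).mpr hkB)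
    have hnonA : (({g : Fin h → ℕ | Monotone g ∧ (∀ i, g i ∈ A) ∧ ∑ i, g i = h * N})).Nonempty := by
      refine ⟨fun _ => N, monotone_const, fun _ => hNA, ?_⟩
      rw [Finset.sum_const, card_univ, Fintype.card_fin, smul_eq_mul]
    have hEq := hAB (h * N)
    have hnonB : ({g : Fin h → ℕ | Monotone g ∧ (∀ i, g i ∈ B) ∧ ∑ i, g i = h * N}).Nonempty := by
      rw [← Set.encard_ne_zero] at hnonA ⊢
      rw [repFnN, repFnN] at hEq
      rw [← hEq]
      exact hnonA
    obtain ⟨g, hm, hBg, hsg⟩ := hnonB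
    have hge : ∀ i, N ≤ g i := by
      intro i
      by_contra hc
      exact hnoB _ (by omega) (hBg i)
    have hle : ∀ i, g i ≤ N := by
      intro j
      by_contra hc
      push_neg at hc
      have hlt2 : ∑ _i : Fin h, N < ∑ i, g i :=
        Finset.sum_lt_sum (fun i _ => hge i) ⟨j, mem_univ j, hc⟩
      rw [Finset.sum_const, card_univ, Fintype.card_fin, smul_eq_mul, hsg] at hlt2
      omega
    have : g ⟨0, by omega⟩ = N := le_antisymm (hle _) (hge _)
    exact hNB (this ▸ hBg ⟨0, by omega⟩)

theorem unique_set_with_representation_function (h : ℕ) (hh : 1 ≤ h)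
    (A B : Set ℕ) (hAB : ∀ n : ℕ, repFnN A h n = repFnN B h n) :
    A = B := by
  ext n
  induction n using Nat.strong_induction_on with
  | _ n ih =>
    exact ⟨fun hn => key_lemma h hh A B hAB n ih hn,
      fun hn => key_lemma h hh B A (fun m => (hAB m).symm) n
        (fun k hk => (ih k hk).symm) hn⟩
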